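/- Maximal inequality transfer: if B_{1/2}{max_{1≤k≤m} S_k > a} ≤ 2 B_{1/2}{S_m > a} for partial sums S_k = ∑_{i=1}^k ω_i with ω_i i.i.d. fair Bernoulli, then for δ > 1 and m_n = ⌈δ^n⌉ the sets U_{δ,n} = {ω : ∃k (m_n ≤ k ≤ m_{n+1} and S_k − k/2 > δ sqrt((1/2) m_n ln ln m_n))} satisfy B_{1/2}(U_{δ,n}) ≤ c·e^{−δ ln ln m_n} for some constant c > 0, and consequently ∑_n B_{1/2}(U_{δ,n}) < ∞. -/

import Mathlib

open MeasureTheory Filter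

/-- The cylinder set determined by a finite binary string. -/
def Cyl (x : List Bool) : Set (ℕ → Bool) :=
  {ω | ∀ i : Fin x.length, ω i = x.get i}

/-- The length-`n` prefix of an infinite binary sequence. -/
def Pre (ω : ℕ → Bool) (n : ℕ) : List Bool := (List.range n).map ω

/-- `x` is a prefix of the infinite sequence `ω`. -/
def PrefixOf (x : List Bool) (ω : ℕ → Bool) : Prop :=
  ∀ i : Fin x.length, ω i = x.get i

/-- `μ` is the uniform Bernoulli measure `B_{1/2}` on Cantor space. -/
def UniformMeasure (μ : Measure (ℕ → Bool)) : Prop :=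
  ∀ x : List Bool, μ (Cyl x) = (2 : ENNReal)⁻¹ ^ x.length

/-- A Solovay test: a computable sequence of strings whose weights form a convergent series. -/
def SolovayTest (x : ℕ → List Bool) : Prop :=
  Computable x ∧ Summable (fun n => (2 : ℝ) ^ (-((x n).length : ℤ)))

/-- `ω` passes the Solovay test `x`: only finitely many `x n` are prefixes of `ω`. -/
def PassesSolovay (x : ℕ → List Bool) (ω : ℕ → Bool) : Prop :=
  {n | PrefixOf (x n) ω}.Finite

/-- A total Solovay test: the series converges with a computable rate of convergence. -/
def TotalSolovayTest (x : ℕ → List Bool) : Prop :=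
  SolovayTest x ∧ ∃ m : ℚ → ℕ, Computable m ∧
    ∀ δ : ℚ, 0 < δ → ∑' n : {n : ℕ // m δ ≤ n}, (2 : ℝ) ^ (-((x n.1).length : ℤ)) ≤ (δ : ℝ)

/-- The effectively open set enumerated by the `n`-th row of `f`. -/
def EffOpen (f : ℕ → ℕ → List Bool) (n : ℕ) : Set (ℕ → Bool) := ⋃ i, Cyl (f n i)

/-- A Martin-Löf test with respect to `μ`. -/
def MLTest (μ : Measure (ℕ → Bool)) (f : ℕ → ℕ → List Bool) : Prop :=
  Computable₂ f ∧ ∀ n, μ (EffOpen f n) ≤ (2 : ENNReal)⁻¹ ^ n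

/-- A Schnorr test: a Martin-Löf test whose measures are uniformly computable reals. -/
def SchnorrTest (μ : Measure (ℕ → Bool)) (f : ℕ → ℕ → List Bool) : Prop :=
  MLTest μ f ∧ ∃ g : ℕ → ℚ → ℚ, Computable₂ g ∧
    ∀ (n : ℕ) (ε : ℚ), 0 < ε → |(g n ε : ℝ) - (μ (EffOpen f n)).toReal| ≤ (ε : ℝ)

/-- Martin-Löf randomness with respect to `μ`. -/
def MLRandom (μ : Measure (ℕ → Bool)) (ω : ℕ → Bool) : Prop :=
  ∀ f, MLTest μ f → ∃ n, ω ∉ EffOpen f n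

/-- Schnorr randomness with respect to `μ`. -/
def SchnorrRandom (μ : Measure (ℕ → Bool)) (ω : ℕ → Bool) : Prop :=
  ∀ f, SchnorrTest μ f → ∃ n, ω ∉ EffOpen f n

/-- A monotone machine: a partial computable monotone map on binary strings. -/
def MonotoneMachine (ψ : List Bool →. List Bool) : Prop :=
  Partrec ψ ∧ ∀ p p' y y', y ∈ ψ p → y' ∈ ψ p' → p <+: p' → (y <+: y' ∨ y' <+: y)

/-- `Km` is the monotone Kolmogorov complexity determined by some optimal monotone machine. -/
def IsKm (Km : List Bool → ℕ) : Prop :=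
  ∃ ψ : List Bool →. List Bool, MonotoneMachine ψ ∧
    (∀ x : List Bool, ∃ p y, y ∈ ψ p ∧ x <+: y ∧ p.length = Km x) ∧
    (∀ x p y, y ∈ ψ p → x <+: y → Km x ≤ p.length) ∧
    (∀ ψ' : List Bool →. List Bool, MonotoneMachine ψ' →
      ∃ c : ℕ, ∀ x p y, y ∈ ψ' p → x <+: y → Km x ≤ p.length + c)

/-- A computable real-valued function on Cantor space. -/
def ComputableRealFn (f : (ℕ → Bool) → ℝ) : Prop :=
  ∃ F : List Bool → ℚ → ℚ, ∃ k : ℚ → ℕ, Computable₂ F ∧ Computable k ∧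
    ∀ (ω : ℕ → Bool) (ε : ℚ), 0 < ε → |(F (Pre ω (k ε)) ε : ℝ) - f ω| ≤ (ε : ℝ)

/-- A computable transformation of Cantor space, induced by a monotone machine. -/
def ComputableTrans (T : (ℕ → Bool) → (ℕ → Bool)) : Prop :=
  ∃ ψ : List Bool →. List Bool, MonotoneMachine ψ ∧
    ∀ ω : ℕ → Bool, (∀ n y, y ∈ ψ (Pre ω n) → y = Pre (T ω) y.length) ∧
      (∀ k, ∃ n y, y ∈ ψ (Pre ω n) ∧ k ≤ y.length)

/-- The number of ones among the first `k` coordinates. -/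
def Ones (k : ℕ) (ω : ℕ → Bool) : ℝ := ∑ i ∈ Finset.range k, (if ω i then (1 : ℝ) else 0)

section Aux
open Finset
open scoped Classical

lemma measurableSet_cyl (x : List Bool) : MeasurableSet (Cyl x) := by
  have : Cyl x = ⋂ i : Fin x.length, (fun ω : ℕ → Bool => ω i) ⁻¹' {x.get i} := by
    ext ω; simp [Cyl, Set.mem_iInter]
  rw [this]
  exact MeasurableSet.iInter fun i => (measurable_pi_apply _) (measurableSet_singleton _)

lemma mem_cyl_ofFn {M : ℕ} (x : Fin M → Bool) (ω : ℕ → Bool) :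
    ω ∈ Cyl (List.ofFn x) ↔ (fun i : Fin M => ω i) = x := by
  constructor
  · intro h; funext i
    have := h ⟨i, by simp [List.length_ofFn]⟩
    simpa using this
  · intro h i
    have : (i : ℕ) < M := by have := i.2; simpa [List.length_ofFn] using this
    have h2 := congrFun h ⟨i, this⟩
    simp at h2
    simp [List.get_ofFn, h2]

lemma meas_pred (μ : Measure (ℕ → Bool)) (hμ : UniformMeasure μ) (M : ℕ)
    (p : (Fin M → Bool) → Prop) [DecidablePred p] :
    μ {ω | p (fun i : Fin M => ω i)} =
      (Finset.univ.filter p).card * (2 : ENNReal)⁻¹ ^ M := by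
  have hset : {ω : ℕ → Bool | p (fun i : Fin M => ω i)} =
      ⋃ x ∈ Finset.univ.filter p, Cyl (List.ofFn x) := by
    ext ω
    simp only [Set.mem_setOf_eq, Set.mem_iUnion, Finset.mem_filter, Finset.mem_univ, true_and]
    constructor
    · intro h
      exact ⟨fun i => ω i, h, (mem_cyl_ofFn _ ω).2 rfl⟩
    · rintro ⟨x, hx, hmem⟩
      rw [(mem_cyl_ofFn _ ω).1 hmem]; exact hx
  rw [hset, measure_biUnion_finset ?_ (fun x _ => measurableSet_cyl _)]
  · have : ∀ x ∈ Finset.univ.filter p, μ (Cyl (List.ofFn x)) = (2 : ENNReal)⁻¹ ^ M := by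
      intro x _; rw [hμ]; simp
    rw [Finset.sum_congr rfl this, Finset.sum_const, nsmul_eq_mul]
  · intro x hx y hy hxy
    simp only [Function.onFun, Set.disjoint_left]
    intro ω h1 h2
    exact hxy (((mem_cyl_ofFn _ ω).1 h1).symm.trans ((mem_cyl_ofFn _ ω).1 h2))
open MeasureTheory Filter


/-- extend a finite vector by `false`. -/
def extv {M : ℕ} (x : Fin M → Bool) : ℕ → Bool :=
  fun i => if h : i < M then x ⟨i, h⟩ else false

lemma ones_extv_eq {M k : ℕ} (hk : k ≤ M) (ω : ℕ → Bool) :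
    Ones k (extv (fun i : Fin M => ω i)) = Ones k ω := by
  unfold Ones
  refine Finset.sum_congr rfl fun i hi => ?_
  have : i < M := lt_of_lt_of_le (Finset.mem_range.1 hi) hk
  simp [extv, this]

/-- agreement of Ones on the flip map -/
def flipAfter {M : ℕ} (k : ℕ) (x : Fin M → Bool) : Fin M → Bool :=
  fun i => if (i : ℕ) < k then x i else !(x i)

lemma flipAfter_invol {M : ℕ} (k : ℕ) (x : Fin M → Bool) :
    flipAfter k (flipAfter k x) = x := by
  funext i; by_cases h : (i : ℕ) < k <;> simp [flipAfter, h]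

lemma ones_flipAfter {M k j : ℕ} (hj : j ≤ k) (x : Fin M → Bool) :
    Ones j (extv (flipAfter k x)) = Ones j (extv x) := by
  unfold Ones
  refine Finset.sum_congr rfl fun i hi => ?_
  have hik : i < k := lt_of_lt_of_le (Finset.mem_range.1 hi) hj
  by_cases h : i < M
  · simp [extv, h, flipAfter, hik]
  · simp [extv, h]

lemma ones_add_flip {M k : ℕ} (hk : k ≤ M) (x : Fin M → Bool) :
    Ones M (extv x) + Ones M (extv (flipAfter k x)) = 2 * Ones k (extv x) + (M - k : ℝ) := by
  unfold Ones
  rw [← Finset.sum_add_distrib]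
  have hsplit : ∀ m : ℕ, m ≤ M → (∑ i ∈ Finset.range m,
      ((if extv x i then (1:ℝ) else 0) + (if extv (flipAfter k x) i then (1:ℝ) else 0)))
      = (∑ i ∈ Finset.range (min m k), 2 * (if extv x i then (1:ℝ) else 0))
        + ((m : ℝ) - min m k) := by
    intro m hm
    induction m with
    | zero => simp
    | succ m ih =>
      rw [Finset.sum_range_succ, ih (le_of_lt (Nat.lt_of_succ_le hm))]
      have hmM : m < M := Nat.lt_of_succ_le hm
      by_cases hmk : m < k
      · have h1 : min (m+1) k = (min m k) + 1 := by omega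
        have h2 : min m k = m := by omega
        rw [h1, h2, Finset.sum_range_succ]
        have : extv (flipAfter k x) m = extv x m := by
          simp [extv, hmM, flipAfter, hmk]
        rw [this]
        have h3 : min m k = m := by omega
        push_cast [h2]
        by_cases hx : extv x m <;> simp [hx] <;> ring
      · have h1 : min (m+1) k = min m k := by omega
        rw [h1]
        have : extv (flipAfter k x) m = !(extv x m) := by
          simp [extv, hmM, flipAfter, hmk]
        rw [this]
        push_cast
        by_cases hx : extv x m <;> simp [hx] <;> ring
  have h := hsplit M le_rfl
  have hminMk : min M k = k := by omega
  rw [hminMk] at h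
  rw [h, Finset.mul_sum]
open MeasureTheory Filter Finset
open scoped Classical

noncomputable def Tv {M : ℕ} (k : ℕ) (x : Fin M → Bool) : ℝ := Ones k (extv x) - k / 2

lemma tv_flipAfter {M k j : ℕ} (hj : j ≤ k) (x : Fin M → Bool) :
    Tv j (flipAfter k x) = Tv j x := by
  unfold Tv; rw [ones_flipAfter hj]

lemma tv_add_flip {M k : ℕ} (hk : k ≤ M) (x : Fin M → Bool) :
    Tv M x + Tv M (flipAfter k x) = 2 * Tv k x := by
  unfold Tv
  have := ones_add_flip hk x
  push_cast [Nat.cast_sub hk] at this ⊢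
  linarith

/-- Lévy-type reflection counting inequality. -/
lemma levy_count (M : ℕ) (b : ℝ) (hb : 0 ≤ b) :
    ((univ.filter (fun x : Fin M → Bool => ∃ k ≤ M, b < Tv k x)).card : ℕ) ≤
      2 * (univ.filter (fun x : Fin M → Bool => b < Tv M x)).card := by
  set B := univ.filter (fun x : Fin M → Bool => b < Tv M x) with hB
  set Ak : ℕ → Finset (Fin M → Bool) :=
    fun k => univ.filter (fun x => b < Tv k x ∧ ∀ j < k, Tv j x ≤ b) with hAk
  have hcover : univ.filter (fun x : Fin M → Bool => ∃ k ≤ M, b < Tv k x) ⊆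
      (Finset.range (M+1)).biUnion Ak := by
    intro x hx
    simp only [mem_filter, mem_univ, true_and] at hx
    obtain ⟨k, hkM, hkb⟩ := hx
    have hex : ∃ k, b < Tv k x := ⟨k, hkb⟩
    have hfind := Nat.find_spec hex
    refine Finset.mem_biUnion.2 ⟨Nat.find hex, ?_, ?_⟩
    · exact Finset.mem_range.2 (Nat.lt_succ_of_le (le_trans (Nat.find_min' hex hkb) hkM))
    · simp only [hAk, mem_filter, mem_univ, true_and]
      exact ⟨hfind, fun j hj => not_lt.1 (Nat.find_min hex hj)⟩
  -- each A_k bounded by 2|A_k ∩ B|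
  have hAkB : ∀ k ≤ M, (Ak k).card ≤ 2 * (Ak k ∩ B).card := by
    intro k hk
    have hsub : Ak k ⊆ (Ak k ∩ B) ∪ (Ak k ∩ B).image (flipAfter k) := by
      intro x hx
      simp only [hAk, mem_filter, mem_univ, true_and] at hx
      obtain ⟨hxb, hxmin⟩ := hx
      have hflipA : flipAfter k x ∈ Ak k := by
        simp only [hAk, mem_filter, mem_univ, true_and]
        refine ⟨by rwa [tv_flipAfter le_rfl], fun j hj => ?_⟩
        rw [tv_flipAfter (le_of_lt hj)]; exact hxmin j hj
      have hsum := tv_add_flip hk x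
      by_cases hxB : b < Tv M x
      · refine Finset.mem_union_left _ ?_
        simp only [hAk, mem_inter, mem_filter, mem_univ, true_and, hB]
        exact ⟨⟨hxb, hxmin⟩, hxB⟩
      · have : b < Tv M (flipAfter k x) := by
          push_neg at hxB; nlinarith
        refine Finset.mem_union_right _ ?_
        refine Finset.mem_image.2 ⟨flipAfter k x, ?_, flipAfter_invol k x⟩
        simp only [mem_inter, hB, mem_filter, mem_univ, true_and]
        exact ⟨by simpa using hflipA, this⟩
    calc (Ak k).card ≤ ((Ak k ∩ B) ∪ (Ak k ∩ B).image (flipAfter k)).card :=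
            Finset.card_le_card hsub
      _ ≤ (Ak k ∩ B).card + ((Ak k ∩ B).image (flipAfter k)).card := Finset.card_union_le _ _
      _ ≤ (Ak k ∩ B).card + (Ak k ∩ B).card :=
            Nat.add_le_add le_rfl Finset.card_image_le
      _ = 2 * (Ak k ∩ B).card := by ring
  -- A_k ∩ B disjoint over k, contained in B
  have hdisj : ∀ k1 ∈ Finset.range (M+1), ∀ k2 ∈ Finset.range (M+1), k1 ≠ k2 →
      Disjoint (Ak k1 ∩ B) (Ak k2 ∩ B) := by
    intro k1 _ k2 _ hne
    rcases Nat.lt_or_ge k1 k2 with h | h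
    · refine Finset.disjoint_left.2 fun x hx1 hx2 => ?_
      simp only [hAk, mem_inter, mem_filter, mem_univ, true_and] at hx1 hx2
      exact absurd hx1.1.1 (not_lt.2 (hx2.1.2 k1 h))
    · have h' : k2 < k1 := lt_of_le_of_ne h (Ne.symm hne)
      refine Finset.disjoint_left.2 fun x hx1 hx2 => ?_
      simp only [hAk, mem_inter, mem_filter, mem_univ, true_and] at hx1 hx2
      exact absurd hx2.1.1 (not_lt.2 (hx1.1.2 k2 h'))
  calc (univ.filter (fun x : Fin M → Bool => ∃ k ≤ M, b < Tv k x)).card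
      ≤ ((Finset.range (M+1)).biUnion Ak).card := Finset.card_le_card hcover
    _ ≤ ∑ k ∈ Finset.range (M+1), (Ak k).card := Finset.card_biUnion_le
    _ ≤ ∑ k ∈ Finset.range (M+1), 2 * (Ak k ∩ B).card := by
          refine Finset.sum_le_sum fun k hk => hAkB k ?_
          exact Nat.lt_succ_iff.1 (Finset.mem_range.1 hk)
    _ = 2 * ∑ k ∈ Finset.range (M+1), (Ak k ∩ B).card := by rw [Finset.mul_sum]
    _ = 2 * ((Finset.range (M+1)).biUnion (fun k => Ak k ∩ B)).card := by
          rw [Finset.card_biUnion hdisj]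
    _ ≤ 2 * B.card := by
          gcongr
          exact Finset.biUnion_subset.2 fun k _ => Finset.inter_subset_right
lemma ones_extv_fin {M : ℕ} (x : Fin M → Bool) :
    Ones M (extv x) = ∑ i : Fin M, (if x i then (1:ℝ) else 0) := by
  unfold Ones
  rw [← Fin.sum_univ_eq_sum_range (fun i => if extv x i then (1:ℝ) else 0) M]
  refine Finset.sum_congr rfl fun i _ => ?_
  simp [extv, i.isLt]

lemma chernoff_count (M : ℕ) (b : ℝ) (hb : 0 ≤ b) (hM : 0 < M) :
    ((Finset.univ.filter fun x : Fin M → Bool => b < Tv M x).card : ℝ) ≤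
      2 ^ M * Real.exp (-2 * b ^ 2 / M) := by
  set s : ℝ := 4 * b / M with hs
  have hs0 : 0 ≤ s := by positivity
  have hMR : (0:ℝ) < M := by exact_mod_cast hM
  -- step 1: card * exp(s*b) ≤ sum over all x of exp(s * Tv M x)
  have h1 : ((Finset.univ.filter fun x : Fin M → Bool => b < Tv M x).card : ℝ) * Real.exp (s*b)
      ≤ ∑ x : Fin M → Bool, Real.exp (s * Tv M x) := by
    calc ((Finset.univ.filter fun x : Fin M → Bool => b < Tv M x).card : ℝ) * Real.exp (s*b)
        = ∑ _x ∈ Finset.univ.filter (fun x : Fin M → Bool => b < Tv M x),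
            Real.exp (s*b) := by rw [Finset.sum_const, nsmul_eq_mul]
      _ ≤ ∑ x ∈ Finset.univ.filter (fun x : Fin M → Bool => b < Tv M x),
            Real.exp (s * Tv M x) := by
            refine Finset.sum_le_sum fun x hx => ?_
            have := (Finset.mem_filter.1 hx).2
            exact Real.exp_le_exp.2 (by nlinarith)
      _ ≤ ∑ x : Fin M → Bool, Real.exp (s * Tv M x) := by
            refine Finset.sum_le_sum_of_subset_of_nonneg (Finset.filter_subset _ _)
              fun x _ _ => (Real.exp_pos _).le
  -- step 2: mgf computation
  have h2 : ∑ x : Fin M → Bool, Real.exp (s * Tv M x)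
      ≤ 2 ^ M * Real.exp (M * s^2 / 8) := by
    have hprod : ∀ x : Fin M → Bool, Real.exp (s * Tv M x)
        = ∏ i : Fin M, Real.exp (s * ((if x i then (1:ℝ) else 0) - 1/2)) := by
      intro x
      rw [← Real.exp_sum]
      congr 1
      unfold Tv
      rw [ones_extv_fin]
      have hhalf : (M:ℝ)/2 = ∑ _i : Fin M, (1/2:ℝ) := by
        rw [Finset.sum_const, Finset.card_univ, Fintype.card_fin, nsmul_eq_mul]; ring
      rw [hhalf, ← Finset.sum_sub_distrib, Finset.mul_sum]
    calc ∑ x : Fin M → Bool, Real.exp (s * Tv M x)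
        = ∑ x ∈ Fintype.piFinset (fun _ : Fin M => (Finset.univ : Finset Bool)),
            ∏ i : Fin M, Real.exp (s * ((if x i then (1:ℝ) else 0) - 1/2)) := by
          rw [Fintype.piFinset_univ]
          exact Finset.sum_congr rfl fun x _ => hprod x
      _ = ∏ i : Fin M, ∑ c : Bool, Real.exp (s * ((if c then (1:ℝ) else 0) - 1/2)) :=
          (Finset.prod_univ_sum (fun _ : Fin M => (Finset.univ : Finset Bool))
            (fun _ c => Real.exp (s * ((if c then (1:ℝ) else 0) - 1/2)))).symm
      _ = (Real.exp (s/2) + Real.exp (-(s/2))) ^ M := by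
          rw [Finset.prod_const]
          congr 1
          · simp [Fintype.sum_bool]
            ring_nf
          · simp
      _ = (2 * Real.cosh (s/2)) ^ M := by rw [Real.cosh_eq]; ring_nf
      _ ≤ (2 * Real.exp ((s/2)^2/2)) ^ M := by
          refine pow_le_pow_left₀ (by positivity) ?_ M
          have := Real.cosh_le_exp_half_sq (s/2)
          linarith
      _ = 2 ^ M * Real.exp (M * s^2/8) := by
          rw [mul_pow, ← Real.exp_nat_mul]
          congr 1
          ring
  have h3 : ((Finset.univ.filter fun x : Fin M → Bool => b < Tv M x).card : ℝ)
      ≤ 2 ^ M * Real.exp (M * s^2 / 8) * Real.exp (-(s*b)) := by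
    have hpos := Real.exp_pos (s*b)
    rw [Real.exp_neg, ← div_eq_mul_inv, le_div_iff₀ hpos]
    exact le_trans h1 h2
  calc ((Finset.univ.filter fun x : Fin M → Bool => b < Tv M x).card : ℝ)
      ≤ 2 ^ M * Real.exp (M * s^2 / 8) * Real.exp (-(s*b)) := h3
    _ = 2 ^ M * Real.exp (M * s^2 / 8 - s*b) := by rw [mul_assoc, ← Real.exp_add]; ring_nf
    _ = 2 ^ M * Real.exp (-2 * b^2 / M) := by
        congr 2
        rw [hs]
        field_simp
        ring
lemma max_measure_bound (μ : Measure (ℕ → Bool)) (hμ : UniformMeasure μ)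
    (M : ℕ) (hM : 0 < M) (b : ℝ) (hb : 0 ≤ b) :
    μ {ω : ℕ → Bool | ∃ k, k ≤ M ∧ b < Ones k ω - k / 2} ≤
      ENNReal.ofReal (2 * Real.exp (-2 * b ^ 2 / M)) := by
  have hset : {ω : ℕ → Bool | ∃ k, k ≤ M ∧ b < Ones k ω - k / 2} =
      {ω : ℕ → Bool | (fun x : Fin M → Bool => ∃ k ≤ M, b < Tv k x) (fun i => ω i)} := by
    ext ω
    simp only [Set.mem_setOf_eq]
    constructor
    · rintro ⟨k, hk, hb'⟩
      exact ⟨k, hk, by unfold Tv; rwa [ones_extv_eq hk]⟩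
    · rintro ⟨k, hk, hb'⟩
      refine ⟨k, hk, ?_⟩
      unfold Tv at hb'; rwa [ones_extv_eq hk] at hb'
  rw [hset]
  have hmp := meas_pred μ hμ M (fun x : Fin M → Bool => ∃ k ≤ M, b < Tv k x)
  rw [hmp]
  set cA := (Finset.univ.filter (fun x : Fin M → Bool => ∃ k ≤ M, b < Tv k x)).card with hcA
  set cB := (Finset.univ.filter (fun x : Fin M → Bool => b < Tv M x)).card with hcB
  have hlevy : cA ≤ 2 * cB := levy_count M b hb
  have hch : (cB : ℝ) ≤ 2 ^ M * Real.exp (-2 * b ^ 2 / M) := chernoff_count M b hb hM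
  have h2 : (2:ENNReal)⁻¹ = ENNReal.ofReal (1/2) := by
    rw [one_div, ENNReal.ofReal_inv_of_pos (by norm_num)]
    norm_num
  have heq : (cA : ENNReal) * (2:ENNReal)⁻¹ ^ M = ENNReal.ofReal (cA * (1/2:ℝ)^M) := by
    rw [h2, ← ENNReal.ofReal_pow (by norm_num), ENNReal.ofReal_mul' (by positivity)]
    congr 1
    exact (ENNReal.ofReal_natCast cA).symm
  rw [heq]
  refine ENNReal.ofReal_le_ofReal ?_
  have hreal : (cA : ℝ) ≤ 2 * (2 ^ M * Real.exp (-2 * b ^ 2 / M)) := by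
    calc (cA : ℝ) ≤ 2 * cB := by exact_mod_cast hlevy
      _ ≤ 2 * (2 ^ M * Real.exp (-2 * b ^ 2 / M)) := by linarith
  have hp : (0:ℝ) < (1/2:ℝ)^M := by positivity
  calc (cA : ℝ) * (1/2:ℝ)^M ≤ 2 * (2 ^ M * Real.exp (-2 * b ^ 2 / M)) * (1/2:ℝ)^M := by
        gcongr
    _ = 2 * Real.exp (-2 * b ^ 2 / M) * (2 * (1/2:ℝ))^M := by rw [mul_pow]; ring
    _ = 2 * Real.exp (-2 * b ^ 2 / M) := by norm_num
lemma block_bound (μ : Measure (ℕ → Bool)) (hμ : UniformMeasure μ)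
    (d : ℝ) (hd : 1 < d) (n : ℕ) (h3 : 3 ≤ d ^ n) :
    μ {ω : ℕ → Bool | ∃ k : ℕ, ⌈d ^ n⌉₊ ≤ k ∧ k ≤ ⌈d ^ (n + 1)⌉₊ ∧
        d * Real.sqrt ((1 / 2) * ⌈d ^ n⌉₊ * Real.log (Real.log ⌈d ^ n⌉₊)) < Ones k ω - k / 2} ≤
      ENNReal.ofReal ((2 * Real.exp 1) *
        Real.exp (-d * Real.log (Real.log ⌈d ^ n⌉₊))) := by
  have hd0 : (0:ℝ) < d := lt_trans one_pos hd
  set A : ℝ := d ^ n with hA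
  set Mn : ℝ := (⌈d ^ n⌉₊ : ℝ) with hMn
  set M : ℕ := ⌈d ^ (n + 1)⌉₊ with hM
  set L : ℝ := Real.log (Real.log Mn) with hL
  have hApos : (0:ℝ) < A := pow_pos hd0 n
  have hMnA : A ≤ Mn := Nat.le_ceil _
  have hMnle : Mn ≤ A + 1 := le_of_lt (Nat.ceil_lt_add_one hApos.le)
  have hM1ge : d * A ≤ (M : ℝ) := by
    have : d * A = d ^ (n+1) := by rw [hA, pow_succ]; ring
    rw [this]; exact Nat.le_ceil _
  have hM1le : (M : ℝ) ≤ d * A + 1 := by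
    have h1 : (M:ℝ) < d ^ (n+1) + 1 := Nat.ceil_lt_add_one (pow_pos hd0 (n+1)).le
    have : d ^ (n+1) = d * A := by rw [hA, pow_succ]; ring
    linarith [h1, this ▸ h1]
  have hMpos : 0 < M := Nat.ceil_pos.2 (pow_pos hd0 (n+1))
  have hMR : (0:ℝ) < (M:ℝ) := by exact_mod_cast hMpos
  have hlogMn : 1 < Real.log Mn := by
    have h3' : (3:ℝ) ≤ Mn := le_trans h3 hMnA
    have he : Real.exp 1 < 3 := by
      have := Real.exp_one_lt_d9; linarith
    have := Real.log_lt_log (Real.exp_pos 1) (lt_of_lt_of_le he h3')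
    simpa using this
  have hLpos : 0 < L := Real.log_pos hlogMn
  have hLA : L ≤ A := by
    have h1 : L ≤ Real.log Mn := Real.log_le_self (by linarith)
    have h2 : Real.log Mn ≤ Mn - 1 := Real.log_le_sub_one_of_pos (by linarith)
    linarith
  set b : ℝ := d * Real.sqrt ((1/2) * Mn * L) with hb
  have hb0 : 0 ≤ b := mul_nonneg hd0.le (Real.sqrt_nonneg _)
  have hbsq : b ^ 2 = d ^ 2 * ((1/2) * Mn * L) := by
    rw [hb, mul_pow, Real.sq_sqrt (by positivity)]
  have hsub : {ω : ℕ → Bool | ∃ k : ℕ, ⌈d ^ n⌉₊ ≤ k ∧ k ≤ M ∧ b < Ones k ω - k / 2} ⊆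
      {ω : ℕ → Bool | ∃ k, k ≤ M ∧ b < Ones k ω - k / 2} := by
    rintro ω ⟨k, _, hk2, hk3⟩; exact ⟨k, hk2, hk3⟩
  refine le_trans (measure_mono hsub) (le_trans (max_measure_bound μ hμ M hMpos b hb0) ?_)
  refine ENNReal.ofReal_le_ofReal ?_
  have key : d * L - d ^ 2 * Mn * L / (M:ℝ) ≤ 1 := by
    have h5 : d ^ 2 * A * L / (d * A + 1) ≤ d ^ 2 * Mn * L / (M:ℝ) := by
      apply div_le_div₀ (by positivity) (by nlinarith) hMR hM1le
    have h6 : d * L - d ^ 2 * A * L / (d * A + 1) = d * L / (d * A + 1) := by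
      field_simp; ring
    have h7 : d * L / (d * A + 1) ≤ 1 := by
      rw [div_le_one (by positivity)]; nlinarith
    linarith
  have hexp : -2 * b ^ 2 / (M:ℝ) ≤ 1 + (-d * L) := by
    have he1 : -2 * b ^ 2 / (M:ℝ) = -(d ^ 2 * Mn * L / (M:ℝ)) := by
      rw [hbsq]; field_simp
    rw [he1]; linarith
  calc 2 * Real.exp (-2 * b ^ 2 / (M:ℝ)) ≤ 2 * Real.exp (1 + (-d * L)) := by
        have := Real.exp_le_exp.2 hexp
        linarith
    _ = 2 * Real.exp 1 * Real.exp (-d * L) := by rw [Real.exp_add]; ring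

end Aux

open scoped Classical in
set_option maxHeartbeats 1000000 in
/-- maximal inequality transfer for the law of the iterated logarithm. -/
theorem lil_blocks_summable
    (μ : Measure (ℕ → Bool)) (hμ : UniformMeasure μ) [IsProbabilityMeasure μ]
    (hmax : ∀ (m : ℕ) (a : ℝ),
      μ {ω : ℕ → Bool | ∃ k, 1 ≤ k ∧ k ≤ m ∧ a < Ones k ω} ≤ 2 * μ {ω : ℕ → Bool | a < Ones m ω})
    (δ : ℚ) (hδ : 1 < δ) :
    ∃ c : ℝ, 0 < c ∧
      (∀ n : ℕ,
        μ {ω : ℕ → Bool | ∃ k : ℕ, ⌈(δ : ℝ) ^ n⌉₊ ≤ k ∧ k ≤ ⌈(δ : ℝ) ^ (n + 1)⌉₊ ∧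
            (δ : ℝ) * Real.sqrt ((1 / 2) * ⌈(δ : ℝ) ^ n⌉₊ *
              Real.log (Real.log ⌈(δ : ℝ) ^ n⌉₊)) < Ones k ω - k / 2} ≤
          ENNReal.ofReal (c * Real.exp (-(δ : ℝ) * Real.log (Real.log ⌈(δ : ℝ) ^ n⌉₊)))) ∧
      (∑' n : ℕ, μ {ω : ℕ → Bool | ∃ k : ℕ, ⌈(δ : ℝ) ^ n⌉₊ ≤ k ∧ k ≤ ⌈(δ : ℝ) ^ (n + 1)⌉₊ ∧
          (δ : ℝ) * Real.sqrt ((1 / 2) * ⌈(δ : ℝ) ^ n⌉₊ *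
            Real.log (Real.log ⌈(δ : ℝ) ^ n⌉₊)) < Ones k ω - k / 2}) < ⊤ := by
  have hd : (1:ℝ) < (δ:ℝ) := by exact_mod_cast hδ
  have hd0 : (0:ℝ) < (δ:ℝ) := lt_trans one_pos hd
  obtain ⟨N₁, hN₁⟩ := pow_unbounded_of_one_lt (3:ℝ) hd
  set N : ℕ := N₁ + 1 with hN
  have hN1 : 1 ≤ N := Nat.le_add_left 1 N₁
  have hN3 : ∀ n, N ≤ n → (3:ℝ) ≤ (δ:ℝ) ^ n := by
    intro n hn
    calc (3:ℝ) ≤ (δ:ℝ) ^ N₁ := hN₁.le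
      _ ≤ (δ:ℝ) ^ n := pow_le_pow_right₀ hd.le (le_trans (Nat.le_succ N₁) hn)
  set L : ℕ → ℝ := fun n => Real.log (Real.log (⌈(δ:ℝ) ^ n⌉₊ : ℝ)) with hLdef
  set c : ℝ := 2 * Real.exp 1 + ∑ i ∈ Finset.range N, Real.exp ((δ:ℝ) * L i) with hc
  have hsum0 : 0 ≤ ∑ i ∈ Finset.range N, Real.exp ((δ:ℝ) * L i) :=
    Finset.sum_nonneg fun i _ => (Real.exp_pos _).le
  have hcpos : 0 < c := by
    have : (0:ℝ) < 2 * Real.exp 1 := by positivity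
    rw [hc]; linarith
  have h2e : 2 * Real.exp 1 ≤ c := by rw [hc]; linarith
  have hbound : ∀ n : ℕ,
      μ {ω : ℕ → Bool | ∃ k : ℕ, ⌈(δ : ℝ) ^ n⌉₊ ≤ k ∧ k ≤ ⌈(δ : ℝ) ^ (n + 1)⌉₊ ∧
          (δ : ℝ) * Real.sqrt ((1 / 2) * ⌈(δ : ℝ) ^ n⌉₊ *
            Real.log (Real.log ⌈(δ : ℝ) ^ n⌉₊)) < Ones k ω - k / 2} ≤
        ENNReal.ofReal (c * Real.exp (-(δ : ℝ) * Real.log (Real.log ⌈(δ : ℝ) ^ n⌉₊))) := by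
    intro n
    rcases le_or_gt N n with hn | hn
    · refine le_trans (block_bound μ hμ (δ:ℝ) hd n (hN3 n hn)) (ENNReal.ofReal_le_ofReal ?_)
      exact mul_le_mul_of_nonneg_right h2e (Real.exp_pos _).le
    · have h1 : Real.exp ((δ:ℝ) * L n) ≤ c := by
        have hs := Finset.single_le_sum (f := fun i => Real.exp ((δ:ℝ) * L i))
          (fun i _ => (Real.exp_pos _).le) (Finset.mem_range.2 hn)
        have h2 : (0:ℝ) < 2 * Real.exp 1 := by positivity
        rw [hc]; linarith
      have h2 : (1:ℝ) ≤ c * Real.exp (-(δ:ℝ) * L n) := by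
        have hmul : Real.exp ((δ:ℝ) * L n) * Real.exp (-(δ:ℝ) * L n) = 1 := by
          rw [← Real.exp_add]
          norm_num
        nlinarith [Real.exp_pos (-(δ:ℝ) * L n)]
      calc μ _ ≤ 1 := prob_le_one
        _ ≤ ENNReal.ofReal (c * Real.exp (-(δ:ℝ) * L n)) := ENNReal.one_le_ofReal.2 h2
  have hlogδ : 0 < Real.log (δ:ℝ) := Real.log_pos hd
  have hterm : ∀ m : ℕ, N ≤ m →
      Real.exp (-(δ:ℝ) * L m) ≤ (Real.log (δ:ℝ)) ^ (-(δ:ℝ)) * (m:ℝ) ^ (-(δ:ℝ)) := by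
    intro m hm
    have hm1 : (1:ℝ) ≤ (m:ℝ) := by exact_mod_cast le_trans hN1 hm
    have hmld : (0:ℝ) < (m:ℝ) * Real.log (δ:ℝ) := by nlinarith
    have hMn3 : (3:ℝ) ≤ (⌈(δ:ℝ) ^ m⌉₊ : ℝ) := le_trans (hN3 m hm) (Nat.le_ceil _)
    have h1 : (m:ℝ) * Real.log (δ:ℝ) ≤ Real.log (⌈(δ:ℝ) ^ m⌉₊ : ℝ) := by
      have := Real.log_le_log (pow_pos hd0 m) (Nat.le_ceil ((δ:ℝ) ^ m))
      rwa [Real.log_pow] at this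
    have h2 : Real.log ((m:ℝ) * Real.log (δ:ℝ)) ≤ L m :=
      Real.log_le_log hmld h1
    calc Real.exp (-(δ:ℝ) * L m)
        ≤ Real.exp (-(δ:ℝ) * Real.log ((m:ℝ) * Real.log (δ:ℝ))) := by
          apply Real.exp_le_exp.2
          nlinarith
      _ = ((m:ℝ) * Real.log (δ:ℝ)) ^ (-(δ:ℝ)) := by
          rw [Real.rpow_def_of_pos hmld]; ring_nf
      _ = (Real.log (δ:ℝ)) ^ (-(δ:ℝ)) * (m:ℝ) ^ (-(δ:ℝ)) := by
          rw [Real.mul_rpow (by positivity) hlogδ.le]; ring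
  have hsummable : Summable (fun n : ℕ => c * Real.exp (-(δ:ℝ) * L n)) := by
    rw [← summable_nat_add_iff N]
    have hs0 : Summable (fun n : ℕ => (n:ℝ) ^ (-(δ:ℝ))) :=
      Real.summable_nat_rpow.mpr (by linarith)
    have hs1 : Summable (fun n : ℕ => c * (Real.log (δ:ℝ)) ^ (-(δ:ℝ)) * (n:ℝ) ^ (-(δ:ℝ))) :=
      hs0.mul_left _
    have hs2 : Summable (fun n : ℕ =>
        c * (Real.log (δ:ℝ)) ^ (-(δ:ℝ)) * (((n + N : ℕ)):ℝ) ^ (-(δ:ℝ))) :=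
      (summable_nat_add_iff N).2 hs1
    refine Summable.of_nonneg_of_le (fun n => by positivity) (fun n => ?_) hs2
    have := hterm (n + N) (Nat.le_add_left N n)
    calc c * Real.exp (-(δ:ℝ) * L (n + N))
        ≤ c * ((Real.log (δ:ℝ)) ^ (-(δ:ℝ)) * (((n + N : ℕ)):ℝ) ^ (-(δ:ℝ))) := by
          exact mul_le_mul_of_nonneg_left this hcpos.le
      _ = c * (Real.log (δ:ℝ)) ^ (-(δ:ℝ)) * (((n + N : ℕ)):ℝ) ^ (-(δ:ℝ)) := by ring
  refine ⟨c, hcpos, hbound, ?_⟩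
  calc ∑' n : ℕ, μ _ ≤ ∑' n : ℕ,
        ENNReal.ofReal (c * Real.exp (-(δ:ℝ) * Real.log (Real.log (⌈(δ:ℝ) ^ n⌉₊ : ℝ)))) :=
        ENNReal.tsum_le_tsum hbound
    _ = ENNReal.ofReal (∑' n : ℕ, c * Real.exp (-(δ:ℝ) * L n)) :=
        (ENNReal.ofReal_tsum_of_nonneg (fun n => by positivity) hsummable).symm
    _ < ⊤ := ENNReal.ofReal_lt_top
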